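/- Under the stochastic optimal control setup with weight function w, let P^c ∈ Δ_J, let 𝔓(P̂, r̂) be a nonempty box ambiguity set with center P̂ ∈ Δ_J and radii r̂ ∈ ℝ_+^J, and let V* and V̂* be the unique fixed points in 𝒱(S) of the true and robust Bellman operators L and L̂. Then ‖V̂* − V*‖_w ≤ (C̄_w / (1 − γ_w)^2) · ( ‖P̂ − P^c‖_1 + 2 Σ_{j=1}^J r̂_j ). -/

import Mathlib

open Filter Topology

noncomputable section

/-- Box-type ambiguity set `𝔓(P,r) = {Q ∈ Δ_J : P_j - r_j ≤ Q_j ≤ P_j + r_j ∀ j}`. -/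
def boxSet (J : ℕ) (P r : Fin J → ℝ) : Set (Fin J → ℝ) :=
  {Q | Q ∈ stdSimplex ℝ (Fin J) ∧ ∀ j, P j - r j ≤ Q j ∧ Q j ≤ P j + r j}

/-- Expectation of `h` under the probability vector `Q`. -/
def expec {J : ℕ} (Q h : Fin J → ℝ) : ℝ := ∑ j, Q j * h j

/-- Weighted sup norm `‖V‖_w = sup_{s ∈ S} |V s| / w s`. -/
noncomputable def wSupNorm {m : ℕ} (S : Set (Fin m → ℝ)) (w V : (Fin m → ℝ) → ℝ) : ℝ :=
  ⨆ s : S, |V (s : Fin m → ℝ)| / w (s : Fin m → ℝ)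

/-- Distributionally robust Bellman operator. -/
noncomputable def robustBellman {J m n : ℕ} (A : Set (Fin n → ℝ)) (amb : Set (Fin J → ℝ))
    (C : (Fin m → ℝ) → (Fin n → ℝ) → Fin J → ℝ)
    (g : (Fin m → ℝ) → (Fin n → ℝ) → Fin J → Fin m → ℝ)
    (γ : ℝ) (V : (Fin m → ℝ) → ℝ) (s : Fin m → ℝ) : ℝ :=
  ⨅ a : A, ⨆ Q : amb,
    expec (Q : Fin J → ℝ) (fun j => C s (a : Fin n → ℝ) j + γ * V (g s (a : Fin n → ℝ) j))

/-- True Bellman operator under the distribution `Pc`. -/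
noncomputable def trueBellman {J m n : ℕ} (A : Set (Fin n → ℝ)) (Pc : Fin J → ℝ)
    (C : (Fin m → ℝ) → (Fin n → ℝ) → Fin J → ℝ)
    (g : (Fin m → ℝ) → (Fin n → ℝ) → Fin J → Fin m → ℝ)
    (γ : ℝ) (V : (Fin m → ℝ) → ℝ) (s : Fin m → ℝ) : ℝ :=
  ⨅ a : A, expec Pc (fun j => C s (a : Fin n → ℝ) j + γ * V (g s (a : Fin n → ℝ) j))

/-- Policy-evaluation Bellman operator under the distribution `Pc`. -/
noncomputable def policyBellman {J m n : ℕ} (Pc : Fin J → ℝ)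
    (C : (Fin m → ℝ) → (Fin n → ℝ) → Fin J → ℝ)
    (g : (Fin m → ℝ) → (Fin n → ℝ) → Fin J → Fin m → ℝ)
    (π : (Fin m → ℝ) → (Fin n → ℝ))
    (γ : ℝ) (V : (Fin m → ℝ) → ℝ) (s : Fin m → ℝ) : ℝ :=
  expec Pc (fun j => C s (π s) j + γ * V (g s (π s) j))

/- helper lemmas -/


lemma expec_abs_le' {J : ℕ} {Q h : Fin J → ℝ} {B : ℝ}
    (hQ : Q ∈ stdSimplex ℝ (Fin J)) (hB : ∀ j, |h j| ≤ B) : |expec Q h| ≤ B := by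
  have h1 : |expec Q h| ≤ ∑ j, |Q j * h j| := Finset.abs_sum_le_sum_abs _ _
  have h2 : ∑ j, |Q j * h j| ≤ ∑ j, Q j * B := by
    apply Finset.sum_le_sum
    intro j _
    rw [abs_mul, abs_of_nonneg (hQ.1 j)]
    exact mul_le_mul_of_nonneg_left (hB j) (hQ.1 j)
  calc |expec Q h| ≤ ∑ j, Q j * B := h1.trans h2
    _ = B := by rw [← Finset.sum_mul, hQ.2, one_mul]

lemma expec_sub_abs_le' {J : ℕ} {Q P h : Fin J → ℝ} {B ε : ℝ} (hB0 : 0 ≤ B)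
    (hB : ∀ j, |h j| ≤ B) (hε : ∑ j, |Q j - P j| ≤ ε) :
    |expec Q h - expec P h| ≤ ε * B := by
  have he : expec Q h - expec P h = ∑ j, (Q j - P j) * h j := by
    unfold expec
    rw [← Finset.sum_sub_distrib]; congr 1; ext j; ring
  rw [he]
  calc |∑ j, (Q j - P j) * h j| ≤ ∑ j, |(Q j - P j) * h j| := Finset.abs_sum_le_sum_abs _ _
    _ ≤ ∑ j, |Q j - P j| * B := by
        apply Finset.sum_le_sum; intro j _; rw [abs_mul]
        exact mul_le_mul_of_nonneg_left (hB j) (abs_nonneg _)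
    _ = (∑ j, |Q j - P j|) * B := (Finset.sum_mul _ _ _).symm
    _ ≤ ε * B := mul_le_mul_of_nonneg_right hε hB0

lemma expec_sub_same_abs_le' {J : ℕ} {Q h1 h2 : Fin J → ℝ} {B : ℝ}
    (hQ : Q ∈ stdSimplex ℝ (Fin J)) (hB : ∀ j, |h1 j - h2 j| ≤ B) :
    |expec Q h1 - expec Q h2| ≤ B := by
  have he : expec Q h1 - expec Q h2 = expec Q (fun j => h1 j - h2 j) := by
    unfold expec
    rw [← Finset.sum_sub_distrib]; congr 1; ext j; ring
  rw [he]; exact expec_abs_le' hQ hB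

lemma abs_ciInf_le' {ι : Type*} [Nonempty ι] {f : ι → ℝ} {B : ℝ}
    (h : ∀ a, |f a| ≤ B) : |⨅ a, f a| ≤ B := by
  have hlb : ∀ a, -B ≤ f a := fun a => (abs_le.1 (h a)).1
  have h1 : -B ≤ ⨅ a, f a := le_ciInf hlb
  obtain ⟨a⟩ := ‹Nonempty ι›
  have h2 : (⨅ a, f a) ≤ f a := ciInf_le ⟨-B, by rintro _ ⟨b, rfl⟩; exact hlb b⟩ a
  rw [abs_le]; exact ⟨h1, h2.trans ((abs_le.1 (h a)).2)⟩

lemma abs_ciSup_sub_le' {ι : Type*} [Nonempty ι] {F : ι → ℝ} {c δ : ℝ}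
    (h : ∀ q, |F q - c| ≤ δ) : |(⨆ q, F q) - c| ≤ δ := by
  have hub : ∀ q, F q ≤ c + δ := fun q => by have := (abs_le.1 (h q)).2; linarith
  have h1 : (⨆ q, F q) ≤ c + δ := ciSup_le hub
  have h2 : c - δ ≤ ⨆ q, F q := by
    obtain ⟨q⟩ := ‹Nonempty ι›
    have hle := le_ciSup (⟨c + δ, by rintro _ ⟨p, rfl⟩; exact hub p⟩ :
      BddAbove (Set.range F)) q
    have := (abs_le.1 (h q)).1
    linarith
  rw [abs_le]; constructor <;> linarith

lemma abs_ciInf_sub_ciInf_le' {ι : Type*} [Nonempty ι] {f g : ι → ℝ} {δ : ℝ}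
    (hf : BddBelow (Set.range f)) (hg : BddBelow (Set.range g))
    (h : ∀ a, |f a - g a| ≤ δ) : |(⨅ a, f a) - ⨅ a, g a| ≤ δ := by
  have key : ∀ (u v : ι → ℝ), BddBelow (Set.range u) → (∀ a, u a ≤ v a + δ) →
      (⨅ a, u a) ≤ (⨅ a, v a) + δ := by
    intro u v hu huv
    have : (⨅ a, u a) - δ ≤ ⨅ a, v a :=
      le_ciInf fun a => by have := ciInf_le hu a; linarith [huv a]
    linarith
  have h1 := key f g hf (fun a => by have := (abs_le.1 (h a)).2; linarith)
  have h2 := key g f hg (fun a => by have := (abs_le.1 (h a)).1; linarith)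
  rw [abs_le]; constructor <;> linarith

lemma wSupNorm_le' {m : ℕ} {S : Set (Fin m → ℝ)} {w V : (Fin m → ℝ) → ℝ} {K : ℝ}
    (hw : ∀ s ∈ S, 0 < w s) (hK : 0 ≤ K) (h : ∀ s ∈ S, |V s| ≤ K * w s) :
    wSupNorm S w V ≤ K :=
  Real.iSup_le (fun s => (div_le_iff₀ (hw s s.2)).2 (by have := h s s.2; linarith)) hK

lemma wSupNorm_nonneg' {m : ℕ} {S : Set (Fin m → ℝ)} {w V : (Fin m → ℝ) → ℝ}
    (hw : ∀ s ∈ S, 0 < w s) : 0 ≤ wSupNorm S w V :=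
  Real.iSup_nonneg fun s => div_nonneg (abs_nonneg _) (hw s s.2).le

lemma le_wSupNorm' {m : ℕ} {S : Set (Fin m → ℝ)} {w V : (Fin m → ℝ) → ℝ} {M : ℝ}
    (hw : ∀ s ∈ S, 0 < w s) (hM : ∀ s ∈ S, |V s| ≤ M * w s) :
    ∀ s ∈ S, |V s| ≤ wSupNorm S w V * w s := by
  intro s hs
  have hb : BddAbove (Set.range fun s : S => |V s| / w s) := by
    refine ⟨max M 0, ?_⟩
    rintro _ ⟨t, rfl⟩
    have hwt := hw t t.2
    refine (div_le_iff₀ hwt).2 ((hM t t.2).trans ?_)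
    exact mul_le_mul_of_nonneg_right (le_max_left M 0) hwt.le
  have hle : |V s| / w s ≤ wSupNorm S w V := le_ciSup hb (⟨s, hs⟩ : S)
  have hws := hw s hs
  calc |V s| = |V s| / w s * w s := by field_simp
    _ ≤ wSupNorm S w V * w s := mul_le_mul_of_nonneg_right hle hws.le


set_option maxHeartbeats 1000000 in
/-- deviation bound between the robust and true optimal value functions
in terms of the ℓ₁ estimation error of the center and the total radius. -/
theorem robust_value_deviation_bound
    (J m n : ℕ) (hJ : 2 ≤ J)
    (S : Set (Fin m → ℝ)) (hS : S.Nonempty) (hScl : IsClosed S)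
    (A : Set (Fin n → ℝ)) (hA : A.Nonempty) (hAcp : IsCompact A)
    (C : (Fin m → ℝ) → (Fin n → ℝ) → Fin J → ℝ)
    (g : (Fin m → ℝ) → (Fin n → ℝ) → Fin J → Fin m → ℝ)
    (hCcont : ∀ j, ContinuousOn (fun p : (Fin m → ℝ) × (Fin n → ℝ) => C p.1 p.2 j) (S ×ˢ A))
    (hgcont : ∀ j, ContinuousOn (fun p : (Fin m → ℝ) × (Fin n → ℝ) => g p.1 p.2 j) (S ×ˢ A))
    (hgS : ∀ s ∈ S, ∀ a ∈ A, ∀ j, g s a j ∈ S)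
    (γ : ℝ) (hγ0 : 0 ≤ γ) (hγ1 : γ < 1)
    (w : (Fin m → ℝ) → ℝ) (hw1 : ∀ s ∈ S, 1 ≤ w s) (hwcont : ContinuousOn w S)
    (Cbar κ : ℝ) (hCbar0 : 0 < Cbar) (hκ0 : 0 ≤ κ)
    (hCb : ∀ s ∈ S, ∀ a ∈ A, ∀ j, |C s a j| ≤ Cbar * w s)
    (hdrift : ∀ s ∈ S, ∀ a ∈ A, ∀ j, w (g s a j) ≤ κ * w s)
    (hγκ : γ * κ < 1)
    (Pc : Fin J → ℝ) (hPc : Pc ∈ stdSimplex ℝ (Fin J))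
    (Phat rhat : Fin J → ℝ) (hPhat : Phat ∈ stdSimplex ℝ (Fin J)) (hrhat : ∀ j, 0 ≤ rhat j)
    (hboxne : (boxSet J Phat rhat).Nonempty)
    (Vstar : (Fin m → ℝ) → ℝ) (hVstarBd : ∃ M, ∀ s ∈ S, |Vstar s| ≤ M * w s)
    (hVstarFix : ∀ s ∈ S, Vstar s = trueBellman A Pc C g γ Vstar s)
    (Vhat : (Fin m → ℝ) → ℝ) (hVhatBd : ∃ M, ∀ s ∈ S, |Vhat s| ≤ M * w s)
    (hVhatFix : ∀ s ∈ S, Vhat s = robustBellman A (boxSet J Phat rhat) C g γ Vhat s) :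
    wSupNorm S w (fun s => Vhat s - Vstar s)
      ≤ Cbar / (1 - γ * κ) ^ 2 * ((∑ j, |Phat j - Pc j|) + 2 * ∑ j, rhat j) := by
  have hwpos : ∀ s ∈ S, 0 < w s := fun s hs => lt_of_lt_of_le one_pos (hw1 s hs)
  haveI hAne : Nonempty A := hA.to_subtype
  haveI hBoxne : Nonempty (boxSet J Phat rhat) := hboxne.to_subtype
  have hD0 : (0:ℝ) < 1 - γ * κ := by linarith
  have hDne : (1 - γ * κ) ≠ 0 := ne_of_gt hD0
  set ε := (∑ j, |Phat j - Pc j|) + ∑ j, rhat j with hεdef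
  have hε0 : 0 ≤ ε :=
    add_nonneg (Finset.sum_nonneg fun j _ => abs_nonneg _)
      (Finset.sum_nonneg fun j _ => hrhat j)
  have hQdev : ∀ Q ∈ boxSet J Phat rhat, ∑ j, |Q j - Pc j| ≤ ε := by
    intro Q hQ
    calc ∑ j, |Q j - Pc j| ≤ ∑ j, (|Q j - Phat j| + |Phat j - Pc j|) :=
          Finset.sum_le_sum fun j _ => abs_sub_le _ _ _
      _ = (∑ j, |Q j - Phat j|) + ∑ j, |Phat j - Pc j| := Finset.sum_add_distrib
      _ ≤ (∑ j, rhat j) + ∑ j, |Phat j - Pc j| := by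
          refine add_le_add (Finset.sum_le_sum fun j _ => ?_) le_rfl
          have h1 := (hQ.2 j).1
          have h2 := (hQ.2 j).2
          exact abs_le.2 ⟨by linarith, by linarith⟩
      _ = ε := by rw [hεdef]; ring
  -- weighted bound Cbar/(1-γκ) for Vstar
  obtain ⟨M1, hM1⟩ := hVstarBd
  have hV1 : ∀ s ∈ S, |Vstar s| ≤ wSupNorm S w Vstar * w s := le_wSupNorm' hwpos hM1
  have hN1nn : 0 ≤ wSupNorm S w Vstar := wSupNorm_nonneg' hwpos
  set N1 := wSupNorm S w Vstar with hN1def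
  have hstep1 : ∀ s ∈ S, |Vstar s| ≤ (Cbar + γ * κ * N1) * w s := by
    intro s hs
    rw [hVstarFix s hs]
    unfold trueBellman
    apply abs_ciInf_le'
    intro a
    apply expec_abs_le' hPc
    intro j
    have h1 := hCb s hs a a.2 j
    have h2 := hV1 _ (hgS s hs a a.2 j)
    have h3 := hdrift s hs a a.2 j
    have h4 : |C s a j + γ * Vstar (g s a j)| ≤ |C s a j| + γ * |Vstar (g s a j)| := by
      calc |C s a j + γ * Vstar (g s a j)| ≤ |C s a j| + |γ * Vstar (g s a j)| := abs_add_le _ _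
        _ = |C s a j| + γ * |Vstar (g s a j)| := by rw [abs_mul, abs_of_nonneg hγ0]
    have h5 : γ * |Vstar (g s a j)| ≤ γ * (N1 * w (g s a j)) :=
      mul_le_mul_of_nonneg_left h2 hγ0
    have h6 : γ * N1 * w (g s a j) ≤ γ * N1 * (κ * w s) :=
      mul_le_mul_of_nonneg_left h3 (mul_nonneg hγ0 hN1nn)
    nlinarith
  have hN1le : N1 ≤ Cbar / (1 - γ * κ) := by
    have hle := wSupNorm_le' hwpos
      (add_nonneg hCbar0.le (mul_nonneg (mul_nonneg hγ0 hκ0) hN1nn)) hstep1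
    rw [le_div_iff₀ hD0]
    nlinarith [hle]
  have hV1' : ∀ s ∈ S, |Vstar s| ≤ Cbar / (1 - γ * κ) * w s := fun s hs =>
    (hV1 s hs).trans (mul_le_mul_of_nonneg_right hN1le (hwpos s hs).le)
  -- weighted bound Cbar/(1-γκ) for Vhat
  obtain ⟨M2, hM2⟩ := hVhatBd
  have hV2 : ∀ s ∈ S, |Vhat s| ≤ wSupNorm S w Vhat * w s := le_wSupNorm' hwpos hM2
  have hN2nn : 0 ≤ wSupNorm S w Vhat := wSupNorm_nonneg' hwpos
  set N2 := wSupNorm S w Vhat with hN2def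
  have hstep2 : ∀ s ∈ S, |Vhat s| ≤ (Cbar + γ * κ * N2) * w s := by
    intro s hs
    rw [hVhatFix s hs]
    unfold robustBellman
    apply abs_ciInf_le'
    intro a
    have hQb : ∀ Q : boxSet J Phat rhat,
        |expec (Q : Fin J → ℝ) (fun j => C s (a : Fin n → ℝ) j + γ * Vhat (g s (a : Fin n → ℝ) j)) - 0|
          ≤ (Cbar + γ * κ * N2) * w s := by
      intro Q
      rw [sub_zero]
      apply expec_abs_le' Q.2.1
      intro j
      have h1 := hCb s hs a a.2 j
      have h2 := hV2 _ (hgS s hs a a.2 j)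
      have h3 := hdrift s hs a a.2 j
      have h4 : |C s a j + γ * Vhat (g s a j)| ≤ |C s a j| + γ * |Vhat (g s a j)| := by
        calc |C s a j + γ * Vhat (g s a j)| ≤ |C s a j| + |γ * Vhat (g s a j)| := abs_add_le _ _
          _ = |C s a j| + γ * |Vhat (g s a j)| := by rw [abs_mul, abs_of_nonneg hγ0]
      have h5 : γ * |Vhat (g s a j)| ≤ γ * (N2 * w (g s a j)) :=
        mul_le_mul_of_nonneg_left h2 hγ0
      have h6 : γ * N2 * w (g s a j) ≤ γ * N2 * (κ * w s) :=
        mul_le_mul_of_nonneg_left h3 (mul_nonneg hγ0 hN2nn)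
      nlinarith
    have := abs_ciSup_sub_le' hQb
    simpa using this
  have hN2le : N2 ≤ Cbar / (1 - γ * κ) := by
    have hle := wSupNorm_le' hwpos
      (add_nonneg hCbar0.le (mul_nonneg (mul_nonneg hγ0 hκ0) hN2nn)) hstep2
    rw [le_div_iff₀ hD0]
    nlinarith [hle]
  have hV2' : ∀ s ∈ S, |Vhat s| ≤ Cbar / (1 - γ * κ) * w s := fun s hs =>
    (hV2 s hs).trans (mul_le_mul_of_nonneg_right hN2le (hwpos s hs).le)
  -- key algebraic identity
  have hkey : Cbar + γ * κ * (Cbar / (1 - γ * κ)) = Cbar / (1 - γ * κ) := by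
    field_simp
    ring
  -- per-term bound on the integrands
  have hbd : ∀ V : (Fin m → ℝ) → ℝ, (∀ t ∈ S, |V t| ≤ Cbar / (1 - γ * κ) * w t) →
      ∀ s ∈ S, ∀ a : A, ∀ j, |C s (a : Fin n → ℝ) j + γ * V (g s (a : Fin n → ℝ) j)|
        ≤ Cbar / (1 - γ * κ) * w s := by
    intro V hV s hs a j
    have h1 := hCb s hs a a.2 j
    have h2 := hV _ (hgS s hs a a.2 j)
    have h3 := hdrift s hs a a.2 j
    have h4 : |C s a j + γ * V (g s a j)| ≤ |C s a j| + γ * |V (g s a j)| := by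
      calc |C s a j + γ * V (g s a j)| ≤ |C s a j| + |γ * V (g s a j)| := abs_add_le _ _
        _ = |C s a j| + γ * |V (g s a j)| := by rw [abs_mul, abs_of_nonneg hγ0]
    have h5 : γ * |V (g s a j)| ≤ γ * (Cbar / (1 - γ * κ) * w (g s a j)) :=
      mul_le_mul_of_nonneg_left h2 hγ0
    have hC0 : 0 ≤ Cbar / (1 - γ * κ) := by positivity
    have h6 : γ * (Cbar / (1 - γ * κ)) * w (g s a j)
        ≤ γ * (Cbar / (1 - γ * κ)) * (κ * w s) :=
      mul_le_mul_of_nonneg_left h3 (mul_nonneg hγ0 hC0)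
    have h7 : |C s a j + γ * V (g s a j)|
        ≤ (Cbar + γ * κ * (Cbar / (1 - γ * κ))) * w s := by nlinarith
    calc |C s a j + γ * V (g s a j)|
        ≤ (Cbar + γ * κ * (Cbar / (1 - γ * κ))) * w s := h7
      _ = Cbar / (1 - γ * κ) * w s := by rw [hkey]
  -- difference norm
  have hdiffBd : ∀ s ∈ S, |Vhat s - Vstar s| ≤ (2 * (Cbar / (1 - γ * κ))) * w s := by
    intro s hs
    have h1 := hV1' s hs
    have h2 := hV2' s hs
    have h3 := le_abs_self (Vhat s)
    have h4 := neg_abs_le (Vhat s)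
    have h5 := le_abs_self (Vstar s)
    have h6 := neg_abs_le (Vstar s)
    exact abs_le.2 ⟨by linarith, by linarith⟩
  set N := wSupNorm S w (fun s => Vhat s - Vstar s) with hNdef
  have hNdiff : ∀ s ∈ S, |Vhat s - Vstar s| ≤ N * w s := le_wSupNorm' hwpos hdiffBd
  have hNnn : 0 ≤ N := wSupNorm_nonneg' hwpos
  -- main contraction-type estimate
  have hstep3 : ∀ s ∈ S, |Vhat s - Vstar s|
      ≤ (γ * κ * N + Cbar / (1 - γ * κ) * ε) * w s := by
    intro s hs
    rw [hVhatFix s hs, hVstarFix s hs]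
    unfold robustBellman trueBellman
    apply abs_ciInf_sub_ciInf_le'
    · refine ⟨-(Cbar / (1 - γ * κ) * w s), ?_⟩
      rintro _ ⟨a, rfl⟩
      have hQb : ∀ Q : boxSet J Phat rhat,
          |expec (Q : Fin J → ℝ) (fun j => C s (a : Fin n → ℝ) j + γ * Vhat (g s (a : Fin n → ℝ) j)) - 0|
            ≤ Cbar / (1 - γ * κ) * w s := by
        intro Q
        rw [sub_zero]
        exact expec_abs_le' Q.2.1 (fun j => hbd Vhat hV2' s hs a j)
      have := abs_ciSup_sub_le' hQb
      rw [sub_zero] at this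
      exact (abs_le.1 this).1
    · refine ⟨-(Cbar / (1 - γ * κ) * w s), ?_⟩
      rintro _ ⟨a, rfl⟩
      have := expec_abs_le' hPc (fun j => hbd Vstar hV1' s hs a j)
      exact (abs_le.1 this).1
    · intro a
      apply abs_ciSup_sub_le'
      intro Q
      have t1 : |expec (Q : Fin J → ℝ) (fun j => C s (a : Fin n → ℝ) j + γ * Vhat (g s (a : Fin n → ℝ) j))
          - expec (Q : Fin J → ℝ) (fun j => C s (a : Fin n → ℝ) j + γ * Vstar (g s (a : Fin n → ℝ) j))|
          ≤ γ * κ * N * w s := by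
        apply expec_sub_same_abs_le' Q.2.1
        intro j
        have he : (C s (a : Fin n → ℝ) j + γ * Vhat (g s (a : Fin n → ℝ) j))
            - (C s (a : Fin n → ℝ) j + γ * Vstar (g s (a : Fin n → ℝ) j))
            = γ * (Vhat (g s (a : Fin n → ℝ) j) - Vstar (g s (a : Fin n → ℝ) j)) := by ring
        rw [he, abs_mul, abs_of_nonneg hγ0]
        have h2 := hNdiff _ (hgS s hs a a.2 j)
        have h3 := hdrift s hs a a.2 j
        have h5 : γ * |Vhat (g s a j) - Vstar (g s a j)| ≤ γ * (N * w (g s a j)) :=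
          mul_le_mul_of_nonneg_left h2 hγ0
        have h6 : γ * N * w (g s a j) ≤ γ * N * (κ * w s) :=
          mul_le_mul_of_nonneg_left h3 (mul_nonneg hγ0 hNnn)
        nlinarith
      have hC0 : 0 ≤ Cbar / (1 - γ * κ) * w s := by
        have := (hwpos s hs).le; positivity
      have t2 : |expec (Q : Fin J → ℝ) (fun j => C s (a : Fin n → ℝ) j + γ * Vstar (g s (a : Fin n → ℝ) j))
          - expec Pc (fun j => C s (a : Fin n → ℝ) j + γ * Vstar (g s (a : Fin n → ℝ) j))|
          ≤ ε * (Cbar / (1 - γ * κ) * w s) :=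
        expec_sub_abs_le' hC0 (fun j => hbd Vstar hV1' s hs a j) (hQdev _ Q.2)
      have htri := abs_sub_le
        (expec (Q : Fin J → ℝ) (fun j => C s (a : Fin n → ℝ) j + γ * Vhat (g s (a : Fin n → ℝ) j)))
        (expec (Q : Fin J → ℝ) (fun j => C s (a : Fin n → ℝ) j + γ * Vstar (g s (a : Fin n → ℝ) j)))
        (expec Pc (fun j => C s (a : Fin n → ℝ) j + γ * Vstar (g s (a : Fin n → ℝ) j)))
      nlinarith
  -- conclude
  have hcoef0 : 0 ≤ γ * κ * N + Cbar / (1 - γ * κ) * ε := by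
    have h1 : 0 ≤ Cbar / (1 - γ * κ) := by positivity
    have h2 : 0 ≤ γ * κ * N := mul_nonneg (mul_nonneg hγ0 hκ0) hNnn
    nlinarith
  have hfinal : N ≤ γ * κ * N + Cbar / (1 - γ * κ) * ε :=
    wSupNorm_le' hwpos hcoef0 hstep3
  have h8 : N * (1 - γ * κ) ≤ Cbar / (1 - γ * κ) * ε := by nlinarith
  have h9 : N * (1 - γ * κ) * (1 - γ * κ) ≤ Cbar / (1 - γ * κ) * ε * (1 - γ * κ) :=
    mul_le_mul_of_nonneg_right h8 hD0.le
  have h10 : Cbar / (1 - γ * κ) * ε * (1 - γ * κ) = Cbar * ε := by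
    rw [mul_right_comm, div_mul_cancel₀ Cbar hDne]
  have h11 : N * (1 - γ * κ) ^ 2 ≤ Cbar * ε := by nlinarith
  have hEε : Cbar * ε ≤ Cbar * ((∑ j, |Phat j - Pc j|) + 2 * ∑ j, rhat j) := by
    have hr : 0 ≤ ∑ j, rhat j := Finset.sum_nonneg fun j _ => hrhat j
    have : ε ≤ (∑ j, |Phat j - Pc j|) + 2 * ∑ j, rhat j := by rw [hεdef]; linarith
    exact mul_le_mul_of_nonneg_left this hCbar0.le
  have h12 : N * (1 - γ * κ) ^ 2 ≤ Cbar * ((∑ j, |Phat j - Pc j|) + 2 * ∑ j, rhat j) :=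
    h11.trans hEε
  have hsq : (0:ℝ) < (1 - γ * κ) ^ 2 := by positivity
  calc N = N * (1 - γ * κ) ^ 2 / (1 - γ * κ) ^ 2 := (mul_div_cancel_right₀ N hsq.ne').symm
    _ ≤ Cbar * ((∑ j, |Phat j - Pc j|) + 2 * ∑ j, rhat j) / (1 - γ * κ) ^ 2 :=
        (div_le_div_iff_of_pos_right hsq).2 h12
    _ = Cbar / (1 - γ * κ) ^ 2 * ((∑ j, |Phat j - Pc j|) + 2 * ∑ j, rhat j) := by ring


end
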